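/- Let a ∈ ℝ and h a smooth real function. Under the change of variables X = x, Y = y/(1 + h(x)y) (valid where 1 + h(x)y ≠ 0), solutions of the system ẋ = −y, ẏ = (x + a²x³)(1 + h(x)y)³ + 3axy(1 + h(x)y)² − h'(x)y³ satisfy λ Ẋ = −Y and λ Ẏ = X + 3aXY + a²X³ with λ = 1 − h(X)Y. -/

import Mathlib

theorem abel_system_change_of_variables
    (a : ℝ) (h : ℝ → ℝ) (hh : ContDiff ℝ 1 h)
    (x y : ℝ → ℝ)
    (hx : ∀ t, HasDerivAt x (-(y t)) t)
    (hy : ∀ t, HasDerivAt y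
      ((x t + a ^ 2 * x t ^ 3) * (1 + h (x t) * y t) ^ 3 +
        3 * a * x t * y t * (1 + h (x t) * y t) ^ 2 -
        deriv h (x t) * y t ^ 3) t)
    (hne : ∀ t, 1 + h (x t) * y t ≠ 0) :
    let X : ℝ → ℝ := x
    let Y : ℝ → ℝ := fun t => y t / (1 + h (x t) * y t)
    ∀ t, ∃ X' Y' : ℝ,
      HasDerivAt X X' t ∧ HasDerivAt Y Y' t ∧
      (1 - h (X t) * Y t) * X' = -(Y t) ∧
      (1 - h (X t) * Y t) * Y' = X t + 3 * a * X t * Y t + a ^ 2 * X t ^ 3 := by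
  intro X Y t
  have hht : HasDerivAt h (deriv h (x t)) (x t) :=
    ((hh.differentiable one_ne_zero) (x t)).hasDerivAt
  have hcomp : HasDerivAt (fun s => h (x s)) (deriv h (x t) * (-(y t))) t :=
    hht.comp t (hx t)
  set y' := (x t + a ^ 2 * x t ^ 3) * (1 + h (x t) * y t) ^ 3 +
      3 * a * x t * y t * (1 + h (x t) * y t) ^ 2 -
      deriv h (x t) * y t ^ 3 with hy'
  have hD : HasDerivAt (fun s => 1 + h (x s) * y s)
      (0 + (deriv h (x t) * (-(y t)) * y t + h (x t) * y')) t :=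
    (hasDerivAt_const t (1:ℝ)).add (hcomp.mul (hy t))
  have hYd : HasDerivAt Y
      ((y' * (1 + h (x t) * y t) -
        y t * (0 + (deriv h (x t) * (-(y t)) * y t + h (x t) * y'))) /
        (1 + h (x t) * y t) ^ 2) t :=
    (hy t).div hD (hne t)
  refine ⟨-(y t), _, hx t, hYd, ?_, ?_⟩
  · show (1 - h (x t) * (y t / (1 + h (x t) * y t))) * (-(y t)) =
      -(y t / (1 + h (x t) * y t))
    field_simp [hne t]
    ring
  · show (1 - h (x t) * (y t / (1 + h (x t) * y t))) * _ =
      x t + 3 * a * x t * (y t / (1 + h (x t) * y t)) + a ^ 2 * x t ^ 3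
    rw [hy']
    field_simp [hne t]
    ring
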